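/- Let β | τ² ~ N(0, (σ²/λ₂)·(λ₂τ²/(1+λ₂τ²))) where τ² has density on (0,∞) proportional to (1+λ₂τ²)^{-1/2} exp{−λ₁²τ²/2}. Then the marginal density of β is proportional to exp{−λ₂β²/(2σ²) − λ₁|β|/σ}, the one-dimensional differentially-scaled elastic net prior. -/

import Mathlib

open MeasureTheory Real Set


lemma integrable_aux (a b : ℝ) (ha : 0 ≤ a) (hb : 0 < b) :
    IntegrableOn (fun u : ℝ => Real.exp (-(a / u ^ 2) - b * u ^ 2)) (Set.Ioi 0) := by
  refine Integrable.mono' ((integrable_exp_neg_mul_sq hb).integrableOn) ?_ ?_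
  · refine (ContinuousOn.aestronglyMeasurable ?_ measurableSet_Ioi)
    refine ContinuousOn.rexp (ContinuousOn.sub (ContinuousOn.neg ?_) (by fun_prop))
    exact ContinuousOn.div continuousOn_const (by fun_prop)
      (fun x hx => pow_ne_zero _ (ne_of_gt hx))
  · filter_upwards [ae_restrict_mem measurableSet_Ioi] with u hu
    rw [Real.norm_eq_abs, abs_of_pos (Real.exp_pos _)]
    apply Real.exp_le_exp.mpr
    have : 0 ≤ a / u ^ 2 := div_nonneg ha (sq_nonneg u)
    linarith

lemma mul_exp_bound (a x : ℝ) (ha : 0 < a) :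
    x * Real.exp (-(a * x)) ≤ 1 / (a * Real.exp 1) := by
  have h := Real.add_one_le_exp (a * x - 1)
  have h3 : Real.exp (a * x - 1) * Real.exp 1 = Real.exp (a * x) := by
    rw [← Real.exp_add]; ring_nf
  have h2 : a * x * Real.exp 1 ≤ Real.exp (a * x) := by
    nlinarith [Real.exp_pos (1:ℝ)]
  rw [Real.exp_neg, ← div_eq_mul_inv, div_le_div_iff₀ (Real.exp_pos _) (by positivity)]
  nlinarith

lemma psi_surj (c d : ℝ) (hc : 0 < c) (hd : 0 < d) (y : ℝ) :
    ∃ u : ℝ, 0 < u ∧ d * u - c / u = y := by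
  set s := Real.sqrt (y ^ 2 + 4 * c * d) with hsdef
  have hs2 : s ^ 2 = y ^ 2 + 4 * c * d := Real.sq_sqrt (by positivity)
  have hsy : |y| < s := by
    have h0 : |y| = Real.sqrt (y ^ 2) := (Real.sqrt_sq_eq_abs y).symm
    rw [h0]
    exact Real.sqrt_lt_sqrt (sq_nonneg y) (by nlinarith)
  have hys : 0 < y + s := by
    have : -y ≤ |y| := neg_le_abs y
    linarith
  have hu : 0 < (y + s) / (2 * d) := div_pos hys (by positivity)
  refine ⟨(y + s) / (2 * d), hu, ?_⟩
  have h1 : y + s ≠ 0 := ne_of_gt hys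
  field_simp
  nlinarith

lemma psi_inj (c d : ℝ) (hc : 0 < c) (hd : 0 < d) :
    Set.InjOn (fun u : ℝ => d * u - c / u) (Set.Ioi 0) := by
  intro x hx y hy h
  simp only [Set.mem_Ioi] at hx hy
  simp only at h
  have hx' := ne_of_gt hx
  have hy' := ne_of_gt hy
  field_simp at h
  have key : (x - y) * (d * x * y + c) = 0 := by linear_combination h
  have hpos : 0 < d * x * y + c := by positivity
  rcases mul_eq_zero.mp key with h' | h'
  · linarith
  · linarith

lemma glasser (a b : ℝ) (ha : 0 < a) (hb : 0 < b) :
    ∫ u in Set.Ioi (0:ℝ), Real.exp (-(a / u ^ 2) - b * u ^ 2)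
      = Real.sqrt (π / b) / 2 * Real.exp (-(2 * Real.sqrt (a * b))) := by
  set c := Real.sqrt a with hcdef
  set d := Real.sqrt b with hddef
  have hc : 0 < c := Real.sqrt_pos.mpr ha
  have hd : 0 < d := Real.sqrt_pos.mpr hb
  have hc' : c ≠ 0 := ne_of_gt hc
  have hd' : d ≠ 0 := ne_of_gt hd
  have hc2 : c ^ 2 = a := Real.sq_sqrt ha.le
  have hd2 : d ^ 2 = b := Real.sq_sqrt hb.le
  set f : ℝ → ℝ := fun u => Real.exp (-(d * u - c / u) ^ 2) with hfdef
  have hkey : ∀ u : ℝ, u ≠ 0 →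
      Real.exp (-(a / u ^ 2) - b * u ^ 2) = Real.exp (-(2 * (c * d))) * f u := by
    intro u hu
    simp only [hfdef]
    rw [← Real.exp_add]
    congr 1
    rw [← hc2, ← hd2]
    field_simp
    ring
  have hf_int : IntegrableOn f (Set.Ioi 0) := by
    have h0 : IntegrableOn
        (fun u : ℝ => Real.exp (2 * (c * d)) * Real.exp (-(a / u ^ 2) - b * u ^ 2))
        (Set.Ioi 0) := (integrable_aux a b ha.le hb).const_mul _
    refine h0.congr_fun (fun u hu => ?_) measurableSet_Ioi
    have hu0 : u ≠ 0 := ne_of_gt hu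
    simp only [hfdef]
    rw [← Real.exp_add]
    congr 1
    rw [← hc2, ← hd2]
    field_simp
    ring
  have hg_int : IntegrableOn (fun u : ℝ => (c / d) / u ^ 2 * f u) (Set.Ioi 0) := by
    refine Integrable.mono'
      (((integrable_exp_neg_mul_sq hb).integrableOn).const_mul
        ((c / d) * Real.exp (2 * (c * d)) / (a * Real.exp 1))) ?_ ?_
    · refine (ContinuousOn.aestronglyMeasurable ?_ measurableSet_Ioi)
      refine ContinuousOn.mul ?_ ?_
      · exact ContinuousOn.div continuousOn_const (by fun_prop)
          (fun x hx => pow_ne_zero _ (ne_of_gt hx))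
      · refine ContinuousOn.rexp (ContinuousOn.neg (ContinuousOn.pow ?_ 2))
        exact ContinuousOn.sub (by fun_prop)
          (ContinuousOn.div continuousOn_const (by fun_prop) (fun x hx => ne_of_gt hx))
    · filter_upwards [ae_restrict_mem measurableSet_Ioi] with u hu
      have hu0 : (0:ℝ) < u := hu
      have hu' : u ≠ 0 := ne_of_gt hu0
      have hfu : f u = Real.exp (2 * (c * d)) * Real.exp (-(a * (u ^ 2)⁻¹)) *
          Real.exp (-b * u ^ 2) := by
        simp only [hfdef]
        rw [← Real.exp_add, ← Real.exp_add]
        congr 1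
        rw [← hc2, ← hd2]
        field_simp
        ring
      rw [Real.norm_eq_abs, abs_of_nonneg (by positivity), hfu]
      have hbd := mul_exp_bound a ((u ^ 2)⁻¹) ha
      calc (c / d) / u ^ 2 * (Real.exp (2 * (c * d)) * Real.exp (-(a * (u ^ 2)⁻¹)) *
              Real.exp (-b * u ^ 2))
          = ((c / d) * Real.exp (2 * (c * d))) * ((u ^ 2)⁻¹ * Real.exp (-(a * (u ^ 2)⁻¹)))
              * Real.exp (-b * u ^ 2) := by ring
        _ ≤ ((c / d) * Real.exp (2 * (c * d))) * (1 / (a * Real.exp 1))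
              * Real.exp (-b * u ^ 2) := by
            apply mul_le_mul_of_nonneg_right _ (Real.exp_pos _).le
            apply mul_le_mul_of_nonneg_left hbd (by positivity)
        _ = (c / d) * Real.exp (2 * (c * d)) / (a * Real.exp 1)
              * Real.exp (-b * u ^ 2) := by ring
  have hrefl : ∫ u in Set.Ioi (0:ℝ), f u
      = ∫ u in Set.Ioi (0:ℝ), (c / d) / u ^ 2 * f u := by
    have himg : (fun u : ℝ => c / d / u) '' (Set.Ioi 0) = Set.Ioi 0 := by
      ext y
      simp only [Set.mem_image, Set.mem_Ioi]
      constructor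
      · rintro ⟨u, hu, rfl⟩; positivity
      · intro hy
        have hy' : y ≠ 0 := ne_of_gt hy
        refine ⟨c / d / y, by positivity, ?_⟩
        field_simp
        try ring
    have hderiv : ∀ u ∈ Set.Ioi (0:ℝ),
        HasDerivWithinAt (fun u : ℝ => c / d / u) (-((c / d) / u ^ 2)) (Set.Ioi 0) u := by
      intro u hu
      have hu0 : u ≠ 0 := ne_of_gt (mem_Ioi.mp hu)
      have h0 : HasDerivAt (fun y : ℝ => c / d * y⁻¹) (c / d * -(u ^ 2)⁻¹) u :=
        (hasDerivAt_inv hu0).const_mul (c / d)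
      have he : -((c / d) / u ^ 2) = c / d * -(u ^ 2)⁻¹ := by ring
      rw [he]
      refine HasDerivAt.hasDerivWithinAt ?_
      simpa only [div_eq_mul_inv] using h0
    have hinj : Set.InjOn (fun u : ℝ => c / d / u) (Set.Ioi 0) := by
      intro x hx y hy h
      simp only [Set.mem_Ioi] at hx hy
      have hx' : x ≠ 0 := ne_of_gt hx
      have hy' : y ≠ 0 := ne_of_gt hy
      simp only at h
      field_simp at h
      linarith
    have h0 := integral_image_eq_integral_abs_deriv_smul measurableSet_Ioi hderiv hinj f
    rw [himg] at h0
    rw [h0]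
    refine setIntegral_congr_fun measurableSet_Ioi (fun u hu => ?_)
    have hu0 : (0:ℝ) < u := hu
    have hu' : u ≠ 0 := ne_of_gt hu0
    have habs : |(-((c / d) / u ^ 2))| = (c / d) / u ^ 2 := by
      rw [abs_neg, abs_of_pos (by positivity)]
    rw [smul_eq_mul, habs]
    congr 1
    simp only [hfdef]
    congr 1
    have h1 : d * (c / d / u) = c / u := by
      field_simp
      try ring
    have h2 : c / (c / d / u) = d * u := by
      field_simp
      try ring
    rw [h1, h2]
    ring
  have hmain : Real.sqrt π = 2 * d * ∫ u in Set.Ioi (0:ℝ), f u := by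
    have hderiv : ∀ u ∈ Set.Ioi (0:ℝ),
        HasDerivWithinAt (fun u : ℝ => d * u - c / u) (d + c / u ^ 2) (Set.Ioi 0) u := by
      intro u hu
      have hu0 : u ≠ 0 := ne_of_gt (mem_Ioi.mp hu)
      have hid : HasDerivAt (fun y : ℝ => d * y) d u := by
        simpa using (hasDerivAt_id u).const_mul d
      have hiv : HasDerivAt (fun y : ℝ => c * y⁻¹) (c * -(u ^ 2)⁻¹) u :=
        (hasDerivAt_inv hu0).const_mul c
      have h0 := hid.sub hiv
      have he : d + c / u ^ 2 = d - c * -(u ^ 2)⁻¹ := by ring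
      rw [he]
      refine HasDerivAt.hasDerivWithinAt ?_
      simpa only [div_eq_mul_inv, Pi.sub_def] using h0
    have himg : (fun u : ℝ => d * u - c / u) '' (Set.Ioi 0) = Set.univ := by
      ext y
      simp only [Set.mem_image, Set.mem_univ, iff_true, Set.mem_Ioi]
      obtain ⟨u, hu, he⟩ := psi_surj c d hc hd y
      exact ⟨u, hu, he⟩
    have hinj := psi_inj c d hc hd
    have hsub := integral_image_eq_integral_abs_deriv_smul measurableSet_Ioi hderiv hinj
      (fun w => Real.exp (-w ^ 2))
    rw [himg, MeasureTheory.setIntegral_univ] at hsub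
    have hgauss : ∫ w : ℝ, Real.exp (-w ^ 2) = Real.sqrt π := by
      have h1 := integral_gaussian (1 : ℝ)
      simpa using h1
    rw [hgauss] at hsub
    rw [hsub]
    have hsplit : ∫ u in Set.Ioi (0:ℝ), |d + c / u ^ 2| • Real.exp (-(d * u - c / u) ^ 2)
        = ∫ u in Set.Ioi (0:ℝ), (d * f u + d * ((c / d) / u ^ 2 * f u)) := by
      refine setIntegral_congr_fun measurableSet_Ioi (fun u hu => ?_)
      have hu0 : (0:ℝ) < u := hu
      have hu' : u ≠ 0 := ne_of_gt hu0
      have habs : |d + c / u ^ 2| = d + c / u ^ 2 := abs_of_pos (by positivity)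
      rw [smul_eq_mul, habs]
      simp only [hfdef]
      have hcd : d * ((c / d) / u ^ 2) = c / u ^ 2 := by
        field_simp
        try ring
      linear_combination (-Real.exp (-(d * u - c / u) ^ 2)) * hcd
    rw [hsplit, integral_add (hf_int.const_mul d) (hg_int.const_mul d),
      integral_const_mul, integral_const_mul, ← hrefl]
    ring
  have hK : ∫ u in Set.Ioi (0:ℝ), f u = Real.sqrt π / (2 * d) := by
    rw [hmain]
    field_simp
  calc ∫ u in Set.Ioi (0:ℝ), Real.exp (-(a / u ^ 2) - b * u ^ 2)
      = ∫ u in Set.Ioi (0:ℝ), Real.exp (-(2 * (c * d))) * f u := by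
        refine setIntegral_congr_fun measurableSet_Ioi (fun u hu => ?_)
        exact hkey u (ne_of_gt hu)
    _ = Real.exp (-(2 * (c * d))) * ∫ u in Set.Ioi (0:ℝ), f u := by
        rw [integral_const_mul]
    _ = Real.sqrt (π / b) / 2 * Real.exp (-(2 * Real.sqrt (a * b))) := by
        rw [hK, Real.sqrt_div pi_pos.le, Real.sqrt_mul ha.le, ← hcdef, ← hddef]
        ring

lemma halfint (a b : ℝ) (ha : 0 ≤ a) (hb : 0 < b) :
    ∫ t in Set.Ioi (0:ℝ), (Real.sqrt t)⁻¹ * Real.exp (-(a / t) - b * t)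
      = Real.sqrt (π / b) * Real.exp (-(2 * Real.sqrt (a * b))) := by
  have hderiv : ∀ u ∈ Set.Ioi (0:ℝ),
      HasDerivWithinAt (fun u : ℝ => u ^ 2) (2 * u) (Set.Ioi 0) u := by
    intro u hu
    simpa [mul_comm] using (hasDerivAt_pow 2 u).hasDerivWithinAt (s := Set.Ioi 0)
  have himg : (fun u : ℝ => u ^ 2) '' (Set.Ioi 0) = Set.Ioi 0 := by
    ext y
    simp only [Set.mem_image, Set.mem_Ioi]
    constructor
    · rintro ⟨u, hu, rfl⟩; positivity
    · intro hy
      exact ⟨Real.sqrt y, Real.sqrt_pos.mpr hy, Real.sq_sqrt hy.le⟩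
  have hinj : Set.InjOn (fun u : ℝ => u ^ 2) (Set.Ioi 0) := by
    intro x hx y hy h
    simp only [Set.mem_Ioi] at hx hy
    simp only at h
    nlinarith
  have h0 := integral_image_eq_integral_abs_deriv_smul measurableSet_Ioi hderiv hinj
    (fun t => (Real.sqrt t)⁻¹ * Real.exp (-(a / t) - b * t))
  rw [himg] at h0
  rw [h0]
  have h1 : ∀ u ∈ Set.Ioi (0:ℝ),
      |2 * u| • ((Real.sqrt (u ^ 2))⁻¹ * Real.exp (-(a / u ^ 2) - b * u ^ 2))
        = 2 * Real.exp (-(a / u ^ 2) - b * u ^ 2) := by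
    intro u hu
    have hu0 : (0:ℝ) < u := hu
    rw [smul_eq_mul, abs_of_pos (by positivity), Real.sqrt_sq hu0.le]
    field_simp
  rw [setIntegral_congr_fun measurableSet_Ioi h1, integral_const_mul]
  rcases eq_or_lt_of_le ha with rfl | ha'
  · have h2 : ∀ u ∈ Set.Ioi (0:ℝ),
        Real.exp (-(0 / u ^ 2) - b * u ^ 2) = Real.exp (-b * u ^ 2) := by
      intro u hu
      norm_num
    rw [setIntegral_congr_fun measurableSet_Ioi h2, integral_gaussian_Ioi]
    simp
    ring
  · rw [glasser a b ha' hb]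
    ring


/-- The normal density with mean `0` and variance `v`. -/
noncomputable def normalPDF0 (v x : ℝ) : ℝ :=
  (Real.sqrt (2 * Real.pi * v))⁻¹ * Real.exp (-x ^ 2 / (2 * v))

/-- The data-augmentation representation of the differentially-scaled elastic net prior:
mixing `N(0, (σ²/λ₂)·λ₂t/(1+λ₂t))` over the density on `(0,∞)` proportional to
`(1+λ₂t)^{-1/2} e^{-λ₁²t/2}` yields a marginal density proportional to
`exp{-λ₂β²/(2σ²) - λ₁|β|/σ}`. -/
theorem elastic_net_scale_mixture_differential (lam1 lam2 sig2 : ℝ)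
    (h1 : 0 < lam1) (h2 : 0 < lam2) (hs : 0 < sig2) :
    ∃ C : ℝ, 0 < C ∧ ∀ β : ℝ,
      (∫ t in Set.Ioi (0 : ℝ),
          normalPDF0 (sig2 / lam2 * (lam2 * t / (1 + lam2 * t))) β *
            ((1 + lam2 * t) ^ (-(1 : ℝ) / 2) * Real.exp (-lam1 ^ 2 * t / 2)))
        = C * Real.exp (-(lam2 * β ^ 2) / (2 * sig2) - lam1 * |β| / Real.sqrt sig2) := by
  have hss : 0 < Real.sqrt sig2 := Real.sqrt_pos.mpr hs
  refine ⟨(lam1 * Real.sqrt sig2)⁻¹, by positivity, fun β => ?_⟩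
  set a := β ^ 2 / (2 * sig2) with hadef
  set b := lam1 ^ 2 / 2 with hbdef
  have ha : 0 ≤ a := by positivity
  have hb : 0 < b := by positivity
  set K := (Real.sqrt (2 * π * sig2))⁻¹ * Real.exp (-(lam2 * β ^ 2) / (2 * sig2))
    with hKdef
  have step1 : ∀ t ∈ Set.Ioi (0:ℝ),
      normalPDF0 (sig2 / lam2 * (lam2 * t / (1 + lam2 * t))) β *
          ((1 + lam2 * t) ^ (-(1 : ℝ) / 2) * Real.exp (-lam1 ^ 2 * t / 2))
        = K * ((Real.sqrt t)⁻¹ * Real.exp (-(a / t) - b * t)) := by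
    intro t ht
    have ht0 : (0:ℝ) < t := ht
    have hst : (0:ℝ) < 1 + lam2 * t := by positivity
    have hv : sig2 / lam2 * (lam2 * t / (1 + lam2 * t)) = sig2 * t / (1 + lam2 * t) := by
      field_simp
    have e1 : Real.sqrt (2 * π * (sig2 * t / (1 + lam2 * t)))
        = Real.sqrt (2 * π * sig2) * Real.sqrt t / Real.sqrt (1 + lam2 * t) := by
      rw [show 2 * π * (sig2 * t / (1 + lam2 * t)) = (2 * π * sig2) * t / (1 + lam2 * t) by
        ring]
      rw [Real.sqrt_div (by positivity), Real.sqrt_mul (by positivity)]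
    have e2 : (1 + lam2 * t) ^ (-(1 : ℝ) / 2) = (Real.sqrt (1 + lam2 * t))⁻¹ := by
      rw [show (-(1:ℝ) / 2) = -(1/2) by norm_num, Real.rpow_neg hst.le,
        ← Real.sqrt_eq_rpow]
    have e3 : Real.exp (-β ^ 2 / (2 * (sig2 * t / (1 + lam2 * t))))
        = Real.exp (-(a / t)) * Real.exp (-(lam2 * β ^ 2) / (2 * sig2)) := by
      rw [← Real.exp_add]
      congr 1
      rw [hadef]
      field_simp
      ring
    have e4 : Real.exp (-(a / t) - b * t)
        = Real.exp (-(a / t)) * Real.exp (-lam1 ^ 2 * t / 2) := by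
      rw [← Real.exp_add]
      congr 1
      rw [hbdef]
      ring
    have hsqt : 0 < Real.sqrt t := Real.sqrt_pos.mpr ht0
    have hsqs : 0 < Real.sqrt (1 + lam2 * t) := Real.sqrt_pos.mpr hst
    have hsq2 : 0 < Real.sqrt (2 * π * sig2) := Real.sqrt_pos.mpr (by positivity)
    have hsqt' : Real.sqrt t ≠ 0 := ne_of_gt hsqt
    have hsqs' : Real.sqrt (1 + lam2 * t) ≠ 0 := ne_of_gt hsqs
    have hsq2' : Real.sqrt (2 * π * sig2) ≠ 0 := ne_of_gt hsq2
    rw [normalPDF0, hv, e1, e2, e3, hKdef, e4]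
    field_simp
  rw [setIntegral_congr_fun measurableSet_Ioi step1, integral_const_mul,
    halfint a b ha hb]
  have hab : Real.sqrt (a * b) = lam1 * |β| / (2 * Real.sqrt sig2) := by
    have habv : a * b = (lam1 * |β| / (2 * Real.sqrt sig2)) ^ 2 := by
      rw [hadef, hbdef]
      rw [div_pow, mul_pow, mul_pow, sq_abs, Real.sq_sqrt hs.le]
      field_simp
    rw [habv, Real.sqrt_sq (by positivity)]
  have hpb : Real.sqrt (π / b) = Real.sqrt (2 * π) / lam1 := by
    rw [hbdef, show π / (lam1 ^ 2 / 2) = 2 * π / lam1 ^ 2 by field_simp,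
      Real.sqrt_div (by positivity), Real.sqrt_sq h1.le]
  have h2pi : Real.sqrt (2 * π * sig2) = Real.sqrt (2 * π) * Real.sqrt sig2 :=
    Real.sqrt_mul (by positivity) _
  have hsq2pi : 0 < Real.sqrt (2 * π) := Real.sqrt_pos.mpr (by positivity)
  rw [hKdef, hab, hpb, h2pi]
  rw [show -(lam2 * β ^ 2) / (2 * sig2) - lam1 * |β| / Real.sqrt sig2
      = -(lam2 * β ^ 2) / (2 * sig2) + -(2 * (lam1 * |β| / (2 * Real.sqrt sig2))) by
        field_simp; ring]
  rw [Real.exp_add]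
  field_simp
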